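/- Let m, K, q be natural numbers with 0 ≤ q ≤ K and K ≥ 1, and let ω_1, …, ω_q ≥ 0 be real numbers. Then ∫_{[0,∞)^K} det[λ_i^{j−1}]_{i,j=1..K} · det M(λ) · Π_{i=1}^K λ_i^m e^{−λ_i} dλ_1⋯dλ_K = K! · det B, where M(λ) is the K×K matrix with entries M_{i,j} = λ_i^{j−1} for 1 ≤ j ≤ K−q and M_{i,j} = F_m(ω_{j−(K−q)}·λ_i) for K−q < j ≤ K, and B is the K×K matrix with entries B_{i,j} = (m+i+j−2)! for 1 ≤ j ≤ K−q and B_{i,j} = b_m(i−1, ω_{j−(K−q)}) for K−q < j ≤ K. -/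

import Mathlib

open MeasureTheory

/-- The entire function `F_m(y) = ∑_{k=0}^∞ (m! / ((m+k)! k!)) y^k`
(a normalized `₀F₁` hypergeometric-type series scaled by `m!`). -/
noncomputable def F (m : ℕ) (y : ℝ) : ℝ :=
  ∑' k : ℕ, ((m.factorial : ℝ) / ((m + k).factorial * k.factorial)) * y ^ k

/-- `b_m(n, ω) = e^ω ∑_{k=0}^n (n! (m+n)! m! / ((n-k)! k! (m+k)!)) ω^k`. -/
noncomputable def b (m n : ℕ) (ω : ℝ) : ℝ :=
  Real.exp ω * ∑ k ∈ Finset.range (n + 1),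
    ((n.factorial : ℝ) * (m + n).factorial * m.factorial /
      ((n - k).factorial * k.factorial * (m + k).factorial)) * ω ^ k

open MeasureTheory Set Equiv

section Aux

/-! ### Generic Fubini-type lemmas for `Measure.pi` of a general measure on `ℝ` -/

theorem myInt.fin_nat_prod {n : ℕ} (μ : Measure ℝ) [SigmaFinite μ]
    {f : Fin n → ℝ → ℝ} (hf : ∀ i, Integrable (f i) μ) :
    Integrable (fun (x : Fin n → ℝ) ↦ ∏ i, f i (x i)) (Measure.pi fun _ => μ) := by
  induction n with
  | zero => simp only [Finset.univ_eq_empty, Finset.prod_empty, integrable_const_iff,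
      one_ne_zero, Measure.pi_of_empty, false_or]; rw [Measure.pi_of_empty]; infer_instance
  | succ n n_ih =>
      have := ((measurePreserving_piFinSuccAbove (fun _ : Fin (n+1) => μ) 0).symm)
      rw [← this.integrable_comp_emb (MeasurableEquiv.measurableEmbedding _)]
      simp_rw [MeasurableEquiv.piFinSuccAbove_symm_apply, Fin.insertNthEquiv,
        Fin.prod_univ_succ, Fin.insertNth_zero]
      simp only [Fin.zero_succAbove, Function.comp_def, Fin.cons_zero, Fin.cons_succ,
        Equiv.coe_fn_mk]
      have : Integrable (fun (x : Fin n → ℝ) ↦ ∏ j, f (Fin.succ j) (x j))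
          (Measure.pi fun _ => μ) := n_ih (fun i ↦ hf _)
      exact Integrable.mul_prod (hf 0) this

theorem myInt.integral_fin_nat_prod {n : ℕ} (μ : Measure ℝ) [SigmaFinite μ]
    (f : Fin n → ℝ → ℝ) :
    ∫ x : Fin n → ℝ, ∏ i, f i (x i) ∂(Measure.pi fun _ => μ) = ∏ i, ∫ x, f i x ∂μ := by
  induction n with
  | zero => simp [Measure.pi_of_empty, Measure.real_def]
  | succ n n_ih =>
      calc
        _ = ∫ x : ℝ × (Fin n → ℝ),
            f 0 x.1 * ∏ i : Fin n, f (Fin.succ i) (x.2 i) ∂(μ.prod (Measure.pi fun _ => μ)) := by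
          rw [← ((measurePreserving_piFinSuccAbove
            (fun _ : Fin (n+1) => μ) 0).symm).integral_comp']
          simp only [MeasurableEquiv.piFinSuccAbove_symm_apply, Fin.insertNthEquiv,
            Fin.prod_univ_succ, Fin.insertNth_zero, Equiv.coe_fn_mk, Fin.cons_succ,
            Fin.zero_succAbove, Fin.cons_zero, cast_eq]
        _ = (∫ x, f 0 x ∂μ) * ∏ i : Fin n, ∫ x, f (Fin.succ i) x ∂μ := by
          rw [← n_ih, ← integral_prod_mul]
        _ = ∏ i, ∫ x, f i x ∂μ := by rw [Fin.prod_univ_succ]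


lemma choose_le_two_pow (n p : ℕ) : n.choose p ≤ 2 ^ n := by
  rcases le_or_gt p n with h | h
  · calc n.choose p ≤ ∑ i ∈ Finset.range (n+1), n.choose i :=
        Finset.single_le_sum (fun i _ => Nat.zero_le _) (Finset.mem_range.2 (by omega))
      _ = 2 ^ n := Nat.sum_range_choose n
  · simp [Nat.choose_eq_zero_of_lt h]

lemma summable_coef (m : ℕ) (y : ℝ) :
    Summable fun k : ℕ => (m.factorial : ℝ) / ((m + k).factorial * k.factorial) * y ^ k := by
  rw [← summable_abs_iff]
  refine Summable.of_nonneg_of_le (fun k => abs_nonneg _) (fun k => ?_)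
    (Real.summable_pow_div_factorial |y|)
  rw [abs_mul, abs_pow]
  have h1 : |(m.factorial : ℝ) / ((m + k).factorial * k.factorial)| ≤ 1 / k.factorial := by
    rw [abs_of_nonneg (by positivity), div_le_div_iff₀ (by positivity) (by positivity)]
    have : (m.factorial : ℝ) ≤ (m + k).factorial := by
      exact_mod_cast Nat.factorial_le (Nat.le_add_right m k)
    have hk : (0:ℝ) < k.factorial := by exact_mod_cast Nat.factorial_pos k
    have hmk : (0:ℝ) < (m+k).factorial := by exact_mod_cast Nat.factorial_pos (m+k)
    nlinarith
  calc |(m.factorial : ℝ) / ((m + k).factorial * k.factorial)| * |y| ^ k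
      ≤ (1 / k.factorial) * |y| ^ k := by
        apply mul_le_mul_of_nonneg_right h1 (by positivity)
    _ = |y| ^ k / k.factorial := by ring

lemma summable_moment (m p : ℕ) (ω : ℝ) (hω : 0 ≤ ω) :
    Summable fun k : ℕ => (m.factorial : ℝ) / ((m + k).factorial * k.factorial) * ω ^ k *
      (p + m + k).factorial := by
  rw [← summable_abs_iff]
  have hs : Summable fun k : ℕ =>
      (m.factorial * p.factorial * 2 ^ (p + m) : ℝ) * ((2 * ω) ^ k / k.factorial) :=
    (Real.summable_pow_div_factorial (2 * ω)).mul_left _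
  refine Summable.of_nonneg_of_le (fun k => abs_nonneg _) (fun k => ?_) hs
  have hfact : ((p + m + k).factorial : ℝ)
      = (p + m + k).choose p * p.factorial * (m + k).factorial := by
    have := Nat.choose_mul_factorial_mul_factorial
      (show p ≤ p + m + k by omega) (n := p + m + k)
    have h2 : p + m + k - p = m + k := by omega
    rw [h2] at this
    exact_mod_cast congrArg (Nat.cast (R := ℝ)) this.symm
  have hterm : |(m.factorial : ℝ) / ((m + k).factorial * k.factorial) * ω ^ k *
      (p + m + k).factorial|
      = (m.factorial : ℝ) * p.factorial * (p + m + k).choose p * (ω ^ k / k.factorial) := by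
    rw [abs_of_nonneg (by positivity), hfact]
    field_simp
  rw [hterm]
  have hch : ((p + m + k).choose p : ℝ) ≤ 2 ^ (p + m) * 2 ^ k := by
    rw [← pow_add]
    exact_mod_cast choose_le_two_pow (p + m + k) p
  calc (m.factorial : ℝ) * p.factorial * (p + m + k).choose p * (ω ^ k / k.factorial)
      ≤ (m.factorial : ℝ) * p.factorial * (2 ^ (p + m) * 2 ^ k) * (ω ^ k / k.factorial) := by
        apply mul_le_mul_of_nonneg_right (by
          apply mul_le_mul_of_nonneg_left hch (by positivity)) (by positivity)
    _ = (m.factorial * p.factorial * 2 ^ (p + m) : ℝ) * ((2 * ω) ^ k / k.factorial) := by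
        rw [mul_pow]; ring

lemma integrableOn_pow_exp (n : ℕ) :
    IntegrableOn (fun x : ℝ => x ^ n * Real.exp (-x)) (Ioi 0) := by
  have h := Real.GammaIntegral_convergent (s := (n + 1 : ℝ)) (by positivity)
  refine h.congr_fun (fun x hx => ?_) measurableSet_Ioi
  rw [add_sub_cancel_right]; beta_reduce; rw [Real.rpow_natCast]
  ring

lemma integral_pow_exp (n : ℕ) :
    ∫ x in Ioi (0:ℝ), x ^ n * Real.exp (-x) = n.factorial := by
  have h := Real.Gamma_eq_integral (s := (n + 1 : ℝ)) (by positivity)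
  have h2 : ((n : ℝ) + 1) = ((n + 1 : ℕ) : ℝ) := by push_cast; ring
  rw [Real.Gamma_nat_eq_factorial, h2] at h
  rw [h]
  refine setIntegral_congr_fun measurableSet_Ioi (fun x hx => ?_)
  have h3 : ((n + 1 : ℕ) : ℝ) - 1 = (n : ℝ) := by push_cast; ring
  rw [h3, Real.rpow_natCast]
  ring

lemma key_interchange (n : ℕ) (c : ℕ → ℝ) (hc : ∀ k, 0 ≤ c k)
    (hx : ∀ x : ℝ, Summable fun k => c k * x ^ k)
    (hsum : Summable fun k => c k * (n + k).factorial) :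
    IntegrableOn (fun x => (∑' k, c k * x ^ k) * (x ^ n * Real.exp (-x))) (Ioi 0) ∧
    ∫ x in Ioi (0:ℝ), (∑' k, c k * x ^ k) * (x ^ n * Real.exp (-x))
      = ∑' k, c k * (n + k).factorial := by
  set Fk : ℕ → ℝ → ℝ := fun k x => c k * x ^ k * (x ^ n * Real.exp (-x)) with hFk
  have hFk_eq : ∀ k, Fk k = fun x => c k * (x ^ (n + k) * Real.exp (-x)) := by
    intro k; funext x; simp only [hFk, pow_add]; ring
  have int_k : ∀ k, IntegrableOn (Fk k) (Ioi 0) := by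
    intro k; rw [hFk_eq k]
    exact (integrableOn_pow_exp (n + k)).const_mul (c k)
  have val_k : ∀ k, ∫ x in Ioi (0:ℝ), Fk k x = c k * (n + k).factorial := by
    intro k
    rw [hFk_eq k, MeasureTheory.integral_const_mul, integral_pow_exp]
  have nonneg_k : ∀ k, ∀ x ∈ Ioi (0:ℝ), 0 ≤ Fk k x := by
    intro k x hx'
    have hx0 : (0:ℝ) < x := hx'
    have := hc k
    simp only [hFk]
    positivity
  have norm_k : ∀ k, ∫ x in Ioi (0:ℝ), ‖Fk k x‖ = c k * (n + k).factorial := by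
    intro k
    rw [← val_k k]
    refine setIntegral_congr_fun measurableSet_Ioi (fun x hx' => ?_)
    exact Real.norm_of_nonneg (nonneg_k k x hx')
  have hns : Summable fun k => ∫ x in Ioi (0:ℝ), ‖Fk k x‖ := by
    simpa only [norm_k] using hsum
  have hpt : ∀ x : ℝ, ∑' k, Fk k x = (∑' k, c k * x ^ k) * (x ^ n * Real.exp (-x)) := by
    intro x
    exact tsum_mul_right
  have hsum_x : ∀ x : ℝ, Summable fun k => Fk k x := fun x => (hx x).mul_right _
  -- measurability
  have meas_tsum : Measurable fun x : ℝ => ∑' k, c k * x ^ k := by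
    apply measurable_of_tendsto_metrizable
      (f := fun N (x : ℝ) => ∑ k ∈ Finset.range N, c k * x ^ k)
    · intro N
      exact (continuous_finset_sum _
        (fun k _ => continuous_const.mul (continuous_pow k))).measurable
    · rw [tendsto_pi_nhds]
      intro x
      exact (hx x).hasSum.tendsto_sum_nat
  have meas_g : Measurable fun x : ℝ => (∑' k, c k * x ^ k) * (x ^ n * Real.exp (-x)) :=
    meas_tsum.mul ((continuous_pow n).mul (Real.continuous_exp.comp continuous_neg)).measurable
  have g_nonneg : ∀ x ∈ Ioi (0:ℝ), 0 ≤ (∑' k, c k * x ^ k) * (x ^ n * Real.exp (-x)) := by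
    intro x hx'
    have hx0 : (0:ℝ) < x := hx'
    have h1 : 0 ≤ ∑' k, c k * x ^ k :=
      tsum_nonneg (fun k => by have := hc k; positivity)
    positivity
  constructor
  · refine ⟨meas_g.aestronglyMeasurable, ?_⟩
    rw [hasFiniteIntegral_iff_norm]
    calc ∫⁻ x, ENNReal.ofReal ‖(∑' k, c k * x ^ k) * (x ^ n * Real.exp (-x))‖
          ∂(volume.restrict (Ioi 0))
        = ∫⁻ x, ∑' k, ENNReal.ofReal (Fk k x) ∂(volume.restrict (Ioi 0)) := by
          refine lintegral_congr_ae ?_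
          filter_upwards [ae_restrict_mem measurableSet_Ioi] with x hx'
          rw [Real.norm_of_nonneg (g_nonneg x hx'), ← hpt x,
            ENNReal.ofReal_tsum_of_nonneg (fun k => nonneg_k k x hx') (hsum_x x)]
      _ = ∑' k, ∫⁻ x, ENNReal.ofReal (Fk k x) ∂(volume.restrict (Ioi 0)) := by
          refine lintegral_tsum (fun k => ?_)
          have : Measurable (Fk k) := by
            simp only [hFk]
            exact (measurable_const.mul (measurable_id.pow_const k)).mul
              ((continuous_pow n).mul (Real.continuous_exp.comp continuous_neg)).measurable
          exact (this.ennreal_ofReal).aemeasurable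
      _ = ∑' k, ENNReal.ofReal (c k * (n + k).factorial) := by
          refine tsum_congr (fun k => ?_)
          rw [← val_k k, ofReal_integral_eq_lintegral_ofReal (int_k k) ?_]
          filter_upwards [ae_restrict_mem measurableSet_Ioi] with x hx'
          exact nonneg_k k x hx'
      _ = ENNReal.ofReal (∑' k, c k * (n + k).factorial) :=
          (ENNReal.ofReal_tsum_of_nonneg (fun k => by have := hc k; positivity) hsum).symm
      _ < ⊤ := ENNReal.ofReal_lt_top
  · have h := integral_tsum_of_summable_integral_norm (μ := volume.restrict (Ioi 0))
      (fun k => int_k k) hns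
    calc ∫ x in Ioi (0:ℝ), (∑' k, c k * x ^ k) * (x ^ n * Real.exp (-x))
        = ∫ x in Ioi (0:ℝ), ∑' k, Fk k x := by
          exact integral_congr_ae (Filter.Eventually.of_forall (fun x => (hpt x).symm))
      _ = ∑' k, ∫ x in Ioi (0:ℝ), Fk k x := h.symm
      _ = ∑' k, c k * (n + k).factorial := tsum_congr val_k

lemma real_exp_tsum (ω : ℝ) : Real.exp ω = ∑' n : ℕ, ω ^ n / n.factorial := by
  rw [Real.exp_eq_exp_ℝ, NormedSpace.exp_eq_tsum_div]

lemma tsum_moment_eq_b (m p : ℕ) (ω : ℝ) :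
    ∑' k : ℕ, (m.factorial : ℝ) / ((m + k).factorial * k.factorial) * ω ^ k *
      (p + m + k).factorial = b m p ω := by
  classical
  set u : ℕ → ℝ := fun k => if k ≤ p then
    ((p.factorial : ℝ) * (m + p).factorial * m.factorial /
      ((p - k).factorial * k.factorial * (m + k).factorial)) * ω ^ k else 0 with hu
  set v : ℕ → ℝ := fun j => ω ^ j / j.factorial with hv
  have hnu : Summable fun k => ‖u k‖ := by
    apply summable_of_ne_finset_zero (s := Finset.range (p + 1))
    intro k hk
    have : ¬ k ≤ p := fun h => hk (Finset.mem_range.2 (by omega))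
    simp [hu, this]
  have hnv : Summable fun j => ‖v j‖ := by
    have := Real.summable_pow_div_factorial |ω|
    refine this.congr fun j => ?_
    simp [hv, abs_div, abs_pow]
  -- b = (∑' u) * (∑' v)
  have hb : b m p ω = (∑' k, u k) * (∑' j, v j) := by
    have h1 : ∑' k, u k = ∑ k ∈ Finset.range (p + 1),
        ((p.factorial : ℝ) * (m + p).factorial * m.factorial /
          ((p - k).factorial * k.factorial * (m + k).factorial)) * ω ^ k := by
      rw [tsum_eq_sum (s := Finset.range (p + 1))]
      · refine Finset.sum_congr rfl fun k hk => ?_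
        have : k ≤ p := by have := Finset.mem_range.1 hk; omega
        simp [hu, this]
      · intro k hk
        have : ¬ k ≤ p := fun h => hk (Finset.mem_range.2 (by omega))
        simp [hu, this]
    have h2 : ∑' j, v j = Real.exp ω := (real_exp_tsum ω).symm
    rw [h1, h2, b]
    ring
  rw [hb, tsum_mul_tsum_eq_tsum_sum_antidiagonal_of_summable_norm hnu hnv]
  refine tsum_congr fun n => ?_
  rw [Finset.Nat.sum_antidiagonal_eq_sum_range_succ_mk]
  -- each term
  have hterm : ∀ k ∈ Finset.range (n + 1), u k * v (n - k)
      = ((m.factorial : ℝ) * (m + p).factorial / (m + n).factorial * ω ^ n) *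
        (p.choose k * (m + n).choose (n - k)) := by
    intro k hk
    have hkn : k ≤ n := by have := Finset.mem_range.1 hk; omega
    by_cases hkp : k ≤ p
    · have hch1 : (p.choose k : ℝ) = p.factorial / (k.factorial * (p - k).factorial) :=
        Nat.cast_choose ℝ hkp
      have hch2 : ((m + n).choose (n - k) : ℝ)
          = (m + n).factorial / ((n - k).factorial * (m + n - (n - k)).factorial) :=
        Nat.cast_choose ℝ (by omega)
      have hmk : m + n - (n - k) = m + k := by omega
      rw [hmk] at hch2
      have hωn : ω ^ k * ω ^ (n - k) = ω ^ n := by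
        rw [← pow_add]; congr 1; omega
      simp only [hu, hv, if_pos hkp]
      rw [hch1, hch2]
      have f1 : (0:ℝ) < (p - k).factorial := by exact_mod_cast Nat.factorial_pos _
      have f2 : (0:ℝ) < k.factorial := by exact_mod_cast Nat.factorial_pos _
      have f3 : (0:ℝ) < (m + k).factorial := by exact_mod_cast Nat.factorial_pos _
      have f4 : (0:ℝ) < (n - k).factorial := by exact_mod_cast Nat.factorial_pos _
      have f5 : (0:ℝ) < (m + n).factorial := by exact_mod_cast Nat.factorial_pos _
      field_simp
      rw [← hωn]
    · have : p < k := by omega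
      simp [hu, hkp, Nat.choose_eq_zero_of_lt this]
  rw [Finset.sum_congr rfl hterm, ← Finset.mul_sum]
  have hvdm : ∑ k ∈ Finset.range (n + 1), ((p.choose k : ℝ) * (m + n).choose (n - k))
      = ((p + (m + n)).choose n : ℝ) := by
    have := Nat.add_choose_eq p (m + n) n
    rw [Finset.Nat.sum_antidiagonal_eq_sum_range_succ_mk] at this
    exact_mod_cast congrArg (Nat.cast (R := ℝ)) this.symm
  rw [hvdm]
  have hch : ((p + (m + n)).choose n : ℝ)
      = (p + (m + n)).factorial / (n.factorial * (p + (m + n) - n).factorial) :=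
    Nat.cast_choose ℝ (by omega)
  have e2 : p + (m + n) = p + m + n := by omega
  rw [e2] at hch ⊢
  have e1 : p + m + n - n = p + m := by omega
  rw [e1] at hch
  rw [hch]
  have e3 : m + p = p + m := by omega
  rw [e3]
  have f1 : (0:ℝ) < (m + n).factorial := by exact_mod_cast Nat.factorial_pos _
  have f2 : (0:ℝ) < n.factorial := by exact_mod_cast Nat.factorial_pos _
  have f3 : (0:ℝ) < (p + m).factorial := by exact_mod_cast Nat.factorial_pos _
  field_simp


theorem andreief {K : ℕ} (μ : Measure ℝ) [SigmaFinite μ] (f g : Fin K → ℝ → ℝ)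
    (hfg : ∀ a b, Integrable (fun x => f a x * g b x) μ) :
    ∫ x : Fin K → ℝ,
        (Matrix.of fun i j => f j (x i)).det * (Matrix.of fun i j => g j (x i)).det
        ∂(Measure.pi fun _ => μ)
    = (K.factorial : ℝ) * (Matrix.of fun a b => ∫ x, f a x * g b x ∂μ).det := by
  classical
  -- pointwise expansion of the two determinants
  have expand : ∀ x : Fin K → ℝ,
      (Matrix.of fun i j => f j (x i)).det * (Matrix.of fun i j => g j (x i)).det
      = ∑ σ : Perm (Fin K), ∑ τ : Perm (Fin K),
          ((Perm.sign σ : ℤ) * (Perm.sign τ : ℤ) : ℝ) *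
            ∏ i, (f (σ⁻¹ i) (x i) * g (τ⁻¹ i) (x i)) := by
    intro x
    rw [Matrix.det_apply', Matrix.det_apply', Finset.sum_mul_sum]
    refine Finset.sum_congr rfl fun σ _ => Finset.sum_congr rfl fun τ _ => ?_
    have h1 : ∏ i, (Matrix.of fun i j => f j (x i)) (σ i) i = ∏ i, f (σ⁻¹ i) (x i) := by
      refine Fintype.prod_equiv σ _ _ fun i => ?_
      simp [Matrix.of_apply]
    have h2 : ∏ i, (Matrix.of fun i j => g j (x i)) (τ i) i = ∏ i, g (τ⁻¹ i) (x i) := by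
      refine Fintype.prod_equiv τ _ _ fun i => ?_
      simp [Matrix.of_apply]
    rw [h1, h2, Finset.prod_mul_distrib]
    push_cast
    ring
  simp_rw [expand]
  rw [integral_finset_sum]
  swap
  · intro σ _
    refine integrable_finset_sum _ fun τ _ => ?_
    exact (myInt.fin_nat_prod μ (fun i => hfg (σ⁻¹ i) (τ⁻¹ i))).const_mul _
  have step : ∀ σ : Perm (Fin K),
      (∫ x : Fin K → ℝ, ∑ τ : Perm (Fin K),
        ((Perm.sign σ : ℤ) * (Perm.sign τ : ℤ) : ℝ) *
          ∏ i, (f (σ⁻¹ i) (x i) * g (τ⁻¹ i) (x i)) ∂(Measure.pi fun _ => μ))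
      = (Matrix.of fun a b => ∫ x, f a x * g b x ∂μ).det := by
    intro σ
    rw [integral_finset_sum]
    swap
    · intro τ _
      exact (myInt.fin_nat_prod μ (fun i => hfg (σ⁻¹ i) (τ⁻¹ i))).const_mul _
    have hval : ∀ τ : Perm (Fin K),
        (∫ x : Fin K → ℝ, ((Perm.sign σ : ℤ) * (Perm.sign τ : ℤ) : ℝ) *
          ∏ i, (f (σ⁻¹ i) (x i) * g (τ⁻¹ i) (x i)) ∂(Measure.pi fun _ => μ))
        = ((Perm.sign σ : ℤ) * (Perm.sign τ : ℤ) : ℝ) *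
          ∏ i, ∫ x, f (σ⁻¹ i) x * g (τ⁻¹ i) x ∂μ := by
      intro τ
      rw [integral_const_mul]
      congr 1
      exact myInt.integral_fin_nat_prod μ (fun i y => f (σ⁻¹ i) y * g (τ⁻¹ i) y)
    simp_rw [hval]
    -- reindex τ ↦ σ * τ
    rw [← Equiv.sum_comp (Equiv.mulLeft σ) (fun τ => ((Perm.sign σ : ℤ) * (Perm.sign τ : ℤ) : ℝ) *
      ∏ i, ∫ x, f (σ⁻¹ i) x * g (τ⁻¹ i) x ∂μ)]
    have hsgn : ∀ ρ : Perm (Fin K),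
        ((Perm.sign σ : ℤ) * (Perm.sign (Equiv.mulLeft σ ρ) : ℤ) : ℝ)
          = ((Perm.sign ρ : ℤ) : ℝ) := by
      intro ρ
      have h4u : (Perm.sign σ) * (Perm.sign σ) = 1 := Int.units_mul_self _
      have h4 : ((Perm.sign σ : ℤ) : ℝ) * ((Perm.sign σ : ℤ) : ℝ) = 1 := by
        have := congrArg (fun u : ℤˣ => ((u : ℤ) : ℝ)) h4u
        push_cast at this
        linarith
      have hmul : Perm.sign (σ * ρ) = Perm.sign σ * Perm.sign ρ := by simp
      simp only [Equiv.coe_mulLeft, hmul]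
      push_cast
      rw [← mul_assoc, h4, one_mul]
    have hprod : ∀ ρ : Perm (Fin K),
        (∏ i, ∫ x, f (σ⁻¹ i) x * g (((Equiv.mulLeft σ ρ))⁻¹ i) x ∂μ)
        = ∏ i, ∫ x, f i x * g (ρ⁻¹ i) x ∂μ := by
      intro ρ
      simp only [Equiv.coe_mulLeft, mul_inv_rev, Perm.mul_apply]
      exact Equiv.prod_comp (σ⁻¹ : Perm (Fin K)) (fun j => ∫ x, f j x * g (ρ⁻¹ j) x ∂μ)
    calc ∑ ρ : Perm (Fin K), ((Perm.sign σ : ℤ) * (Perm.sign (Equiv.mulLeft σ ρ) : ℤ) : ℝ) *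
            ∏ i, ∫ x, f (σ⁻¹ i) x * g ((Equiv.mulLeft σ ρ)⁻¹ i) x ∂μ
        = ∑ ρ : Perm (Fin K), ((Perm.sign ρ : ℤ) : ℝ) * ∏ i, ∫ x, f i x * g (ρ⁻¹ i) x ∂μ := by
          refine Finset.sum_congr rfl fun ρ _ => ?_
          rw [hsgn ρ, hprod ρ]
      _ = ∑ ρ : Perm (Fin K), ((Perm.sign ρ : ℤ) : ℝ) * ∏ i, ∫ x, f i x * g (ρ i) x ∂μ := by
          rw [← Equiv.sum_comp (Equiv.inv (Perm (Fin K)))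
            (fun ρ => ((Perm.sign ρ : ℤ) : ℝ) * ∏ i, ∫ x, f i x * g (ρ⁻¹ i) x ∂μ)]
          refine Finset.sum_congr rfl fun ρ _ => ?_
          simp [Equiv.inv_apply]
      _ = (Matrix.of fun a b => ∫ x, f a x * g b x ∂μ).det := by
          rw [← Matrix.det_transpose, Matrix.det_apply']
          exact Finset.sum_congr rfl fun ρ _ => rfl
  simp_rw [step]
  rw [Finset.sum_const, Finset.card_univ, Fintype.card_perm, Fintype.card_fin]
  simp [nsmul_eq_mul]


lemma restrict_pi_Ici (K : ℕ) :
    ((Measure.pi fun _ : Fin K => (volume : Measure ℝ)).restrict (univ.pi fun _ => Ici 0))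
      = Measure.pi (fun _ : Fin K => (volume : Measure ℝ).restrict (Ioi 0)) := by
  have h1 : ((Measure.pi fun _ : Fin K => (volume : Measure ℝ)).restrict
      (univ.pi fun _ => Ici 0))
      = Measure.pi (fun _ : Fin K => (volume : Measure ℝ).restrict (Ici 0)) := by
    refine (Measure.pi_eq fun s hs => ?_).symm
    rw [Measure.restrict_apply (MeasurableSet.univ_pi hs), ← Set.pi_inter_distrib,
      Measure.pi_pi]
    exact Finset.prod_congr rfl fun i _ =>
      (Measure.restrict_apply (hs i)).symm
  rw [h1]
  congr 1
  funext _
  exact (Measure.restrict_congr_set Ioi_ae_eq_Ici).symm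

end Aux

/-- Evaluation of the integral `ℱ_2^{(1)}` in Appendix A of the paper:
`∫_{[0,∞)^K} det[λ_i^{j-1}] · det M(λ) · ∏ λ_i^m e^{-λ_i} dλ = K! det B`,
where the last `q` columns of `M(λ)` are `F_m(ω_j λ_i)` and the corresponding
entries of `B` are `(m+i+j-2)!` resp. `b_m(i-1, ω_j)` (stated with 0-based indices). -/
theorem stmt7 (m K q : ℕ) (hq : q ≤ K) (hK : 1 ≤ K)
    (ω : Fin q → ℝ) (hω : ∀ i, 0 ≤ ω i) :
    (∫ lam : Fin K → ℝ in Set.univ.pi fun _ => Set.Ici (0 : ℝ),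
        (Matrix.of fun i j : Fin K => lam i ^ (j : ℕ)).det *
        (Matrix.of fun i j : Fin K =>
          if h : (j : ℕ) < K - q then lam i ^ (j : ℕ)
          else F m (ω ⟨(j : ℕ) - (K - q), by have := j.isLt; omega⟩ * lam i)).det *
        ∏ i, lam i ^ m * Real.exp (-(lam i))
        ∂(Measure.pi fun _ => (volume : Measure ℝ)))
      = (K.factorial : ℝ) *
        (Matrix.of fun i j : Fin K =>
          if h : (j : ℕ) < K - q then ((m + (i : ℕ) + (j : ℕ)).factorial : ℝ)
          else b m (i : ℕ) (ω ⟨(j : ℕ) - (K - q), by have := j.isLt; omega⟩)).det := by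
  classical
  set ν := (volume : Measure ℝ).restrict (Set.Ioi 0) with hν
  let f : Fin K → ℝ → ℝ := fun j x => x ^ (j : ℕ)
  let g : Fin K → ℝ → ℝ := fun j x =>
    (if h : (j : ℕ) < K - q then x ^ (j : ℕ)
     else F m (ω ⟨(j : ℕ) - (K - q), by have := j.isLt; omega⟩ * x)) *
    (x ^ m * Real.exp (-x))
  -- the `F`-type entries
  have hFentry : ∀ (r : Fin K) (w : ℝ), 0 ≤ w →
      Integrable (fun x => x ^ (r : ℕ) * (F m (w * x) * (x ^ m * Real.exp (-x)))) ν ∧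
      (∫ x, x ^ (r : ℕ) * (F m (w * x) * (x ^ m * Real.exp (-x))) ∂ν)
        = b m (r : ℕ) w := by
    intro r w hw
    set c : ℕ → ℝ := fun k =>
      (m.factorial : ℝ) / ((m + k).factorial * k.factorial) * w ^ k with hc_def
    have hc : ∀ k, 0 ≤ c k := fun k =>
      mul_nonneg (by positivity) (pow_nonneg hw k)
    have hx : ∀ x : ℝ, Summable fun k => c k * x ^ k := fun x =>
      (summable_coef m (w * x)).congr fun k => by
        simp only [hc_def]; try rw [mul_pow]; try ring
    have hs : Summable fun k => c k * ((r : ℕ) + m + k).factorial :=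
      (summable_moment m (r : ℕ) w hw).congr fun k => by
        simp only [hc_def]; try ring
    have key := key_interchange ((r : ℕ) + m) c hc hx hs
    have hfun : (fun x : ℝ => x ^ (r : ℕ) * (F m (w * x) * (x ^ m * Real.exp (-x))))
        = fun x => (∑' k, c k * x ^ k) * (x ^ ((r : ℕ) + m) * Real.exp (-x)) := by
      funext x
      have hF : F m (w * x) = ∑' k, c k * x ^ k := by
        have h0 : F m (w * x)
            = ∑' k, (m.factorial : ℝ) / ((m + k).factorial * k.factorial) * (w * x) ^ k := rfl
        rw [h0]
        exact tsum_congr fun k => by simp only [hc_def]; try rw [mul_pow]; try ring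
      rw [hF, pow_add]; ring
    constructor
    · rw [hfun, hν]; exact key.1
    · rw [hfun, hν]
      rw [key.2, ← tsum_moment_eq_b m (r : ℕ) w]
      try exact tsum_congr fun k => by simp only [hc_def]; try ring
  -- integrability of products
  have hfg : ∀ r s : Fin K, Integrable (fun x => f r x * g s x) ν := by
    intro r s
    by_cases hb : (s : ℕ) < K - q
    · have heq : (fun x : ℝ => f r x * g s x)
          = fun x => x ^ (m + (r : ℕ) + (s : ℕ)) * Real.exp (-x) := by
        funext x
        simp only [f, g, dif_pos hb]
        try rw [pow_add, pow_add]
        try ring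
      rw [heq, hν]
      exact integrableOn_pow_exp _
    · have heq : (fun x : ℝ => f r x * g s x)
          = fun x => x ^ (r : ℕ) *
            (F m (ω ⟨(s : ℕ) - (K - q), by have := s.isLt; omega⟩ * x) *
              (x ^ m * Real.exp (-x))) := by
        funext x
        simp only [f, g, dif_neg hb]
        try ring
      rw [heq]
      exact (hFentry r _ (hω _)).1
  -- determinant row-scaling
  have hdet : ∀ (ψ : Fin K → ℝ → ℝ) (x : Fin K → ℝ),
      (Matrix.of fun i j => ψ j (x i)).det * ∏ i, (x i ^ m * Real.exp (-(x i)))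
      = (Matrix.of fun i j => ψ j (x i) * (x i ^ m * Real.exp (-(x i)))).det := by
    intro ψ x
    have h := Matrix.det_mul_column (fun i => x i ^ m * Real.exp (-(x i)))
      (Matrix.of fun i j => ψ j (x i))
    have h2 : (Matrix.of fun i j => ψ j (x i) * (x i ^ m * Real.exp (-(x i))))
        = Matrix.of fun i j =>
          (x i ^ m * Real.exp (-(x i))) * (Matrix.of fun i j => ψ j (x i)) i j := by
      ext i j; simp only [Matrix.of_apply]; ring
    rw [h2, h]; ring
  have hpt : ∀ x : Fin K → ℝ,
      (Matrix.of fun i j : Fin K => x i ^ (j : ℕ)).det *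
        (Matrix.of fun i j : Fin K =>
          if h : (j : ℕ) < K - q then x i ^ (j : ℕ)
          else F m (ω ⟨(j : ℕ) - (K - q), by have := j.isLt; omega⟩ * x i)).det *
        ∏ i, x i ^ m * Real.exp (-(x i))
      = (Matrix.of fun i j => f j (x i)).det * (Matrix.of fun i j => g j (x i)).det := by
    intro x
    rw [mul_assoc]
    congr 1
    exact hdet (fun j y =>
      if h : (j : ℕ) < K - q then y ^ (j : ℕ)
      else F m (ω ⟨(j : ℕ) - (K - q), by have := j.isLt; omega⟩ * y)) x
  calc (∫ lam : Fin K → ℝ in Set.univ.pi fun _ => Set.Ici (0 : ℝ),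
        (Matrix.of fun i j : Fin K => lam i ^ (j : ℕ)).det *
        (Matrix.of fun i j : Fin K =>
          if h : (j : ℕ) < K - q then lam i ^ (j : ℕ)
          else F m (ω ⟨(j : ℕ) - (K - q), by have := j.isLt; omega⟩ * lam i)).det *
        ∏ i, lam i ^ m * Real.exp (-(lam i))
        ∂(Measure.pi fun _ => (volume : Measure ℝ)))
      = ∫ x : Fin K → ℝ,
          (Matrix.of fun i j => f j (x i)).det * (Matrix.of fun i j => g j (x i)).det
          ∂(Measure.pi fun _ => ν) := by
        rw [restrict_pi_Ici K]
        exact integral_congr_ae (Filter.Eventually.of_forall hpt)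
    _ = (K.factorial : ℝ) * (Matrix.of fun r s => ∫ x, f r x * g s x ∂ν).det :=
        andreief ν f g hfg
    _ = (K.factorial : ℝ) *
        (Matrix.of fun i j : Fin K =>
          if h : (j : ℕ) < K - q then ((m + (i : ℕ) + (j : ℕ)).factorial : ℝ)
          else b m (i : ℕ) (ω ⟨(j : ℕ) - (K - q), by have := j.isLt; omega⟩)).det := by
        congr 1
        congr 1
        ext r s
        simp only [Matrix.of_apply]
        by_cases hb : (s : ℕ) < K - q
        · rw [dif_pos hb]
          have heq : (fun x : ℝ => f r x * g s x)
              = fun x => x ^ (m + (r : ℕ) + (s : ℕ)) * Real.exp (-x) := by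
            funext x
            simp only [f, g, dif_pos hb]
            try rw [pow_add, pow_add]
            try ring
          rw [heq, hν]
          exact integral_pow_exp _
        · rw [dif_neg hb]
          have heq : (fun x : ℝ => f r x * g s x)
              = fun x => x ^ (r : ℕ) *
                (F m (ω ⟨(s : ℕ) - (K - q), by have := s.isLt; omega⟩ * x) *
                  (x ^ m * Real.exp (-x))) := by
            funext x
            simp only [f, g, dif_neg hb]
            try ring
          rw [heq]
          exact (hFentry r _ (hω _)).2
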